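/- Let V be an ℕ-graded vertex algebra with Zhu algebra A(V) = V/O(V), and let (W, Y_W) be an ℕ-gradable weak V-module with top level T(W) = {w ∈ W : u_n w = 0 whenever wt u − n − 1 < 0 for homogeneous u}. Then for every u ∈ V, the operator o(u) = Res_x x^{−1} Y_W(x^{L(0)} u, x) preserves T(W), and the map u + O(V) ↦ o(u)|_{T(W)} defines an A(V)-module structure on T(W); in particular o(u*v)w = o(u)o(v)w for u, v ∈ V, w ∈ T(W), and o(u)w = 0 for u ∈ O(V), w ∈ T(W). -/
import Mathlib


open scoped BigOperators

/-- Generalized binomial coefficient `C(a, i)` for `a : ℤ`, `i : ℕ`, valued in `ℂ`. -/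
noncomputable def gb (a : ℤ) (i : ℕ) : ℂ :=
  (∏ j ∈ Finset.range i, ((a : ℂ) - (j : ℂ))) / (Nat.factorial i : ℂ)

/-- A vertex algebra, presented through the coefficient operators
`coeff u n = u_n = Res_x x^n Y(u,x)` of its vertex operator map, together with the
vacuum, truncation, creation and Borcherds (Jacobi) identity axioms. -/
structure VertexAlgebra (V : Type*) [AddCommGroup V] [Module ℂ V] where
  coeff : V → ℤ → V →ₗ[ℂ] V
  coeff_add : ∀ (u v : V) (n : ℤ), coeff (u + v) n = coeff u n + coeff v n
  coeff_smul : ∀ (c : ℂ) (u : V) (n : ℤ), coeff (c • u) n = c • coeff u n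
  vac : V
  vac_coeff_neg_one : ∀ v : V, coeff vac (-1) v = v
  vac_coeff : ∀ n : ℤ, n ≠ -1 → coeff vac n = 0
  trunc : ∀ u v : V, ∃ N : ℤ, ∀ n ≥ N, coeff u n v = 0
  creation : ∀ (u : V) (n : ℤ), 0 ≤ n → coeff u n vac = 0
  create_neg_one : ∀ u : V, coeff u (-1) vac = u
  borcherds : ∀ (u v w : V) (p q r : ℤ),
    (∑ᶠ i : ℕ, gb p i • coeff (coeff u (r + i) v) (p + q - i) w) =
    ∑ᶠ i : ℕ, ((-1 : ℂ) ^ i * gb r i) •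
      (coeff u (p + r - i) (coeff v (q + i) w)
        - ((-1 : ℂ) ^ r) • coeff v (q + r - i) (coeff u (p + i) w))

/-- A module for a vertex algebra, presented through the coefficient operators
`Yw u n = u_n = Res_x x^n Y_W(u,x)`, with weak associativity (in coefficient form:
for every `a b : ℤ`, the coefficient of `x₀^a x₂^b` in
`(x₀+x₂)^l Y_W(u,x₀+x₂) Y_W(v,x₂) w` equals that in `(x₀+x₂)^l Y_W(Y(u,x₀)v,x₂) w`,
where `(x₀+x₂)^n` is expanded in nonnegative powers of `x₂`) as the main axiom. -/
structure VAModule {V : Type*} [AddCommGroup V] [Module ℂ V] (A : VertexAlgebra V)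
    (W : Type*) [AddCommGroup W] [Module ℂ W] where
  Yw : V → ℤ → W →ₗ[ℂ] W
  Yw_add : ∀ (u v : V) (n : ℤ), Yw (u + v) n = Yw u n + Yw v n
  Yw_smul : ∀ (c : ℂ) (u : V) (n : ℤ), Yw (c • u) n = c • Yw u n
  vac_neg_one : ∀ w : W, Yw A.vac (-1) w = w
  vac_ne : ∀ n : ℤ, n ≠ -1 → Yw A.vac n = 0
  trunc : ∀ (u : V) (w : W), ∃ N : ℤ, ∀ n ≥ N, Yw u n w = 0
  weak_assoc : ∀ (u v : V) (w : W) (l : ℕ),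
    (∀ n : ℤ, (l : ℤ) ≤ n → Yw u n w = 0) →
    ∀ a b : ℤ,
      (∑ᶠ j : ℕ, gb (a + j) j • Yw u ((l : ℤ) - 1 - a - j) (Yw v ((j : ℤ) - b - 1) w)) =
      ∑ j ∈ Finset.range (l + 1),
        gb l j • Yw (A.coeff u ((l : ℤ) - j - a - 1) v) ((j : ℤ) - b - 1) w

/-- A ℤ-graded vertex algebra: a vertex algebra with an internal direct sum
decomposition `V = ⨁_{n∈ℤ} V_(n)` compatible with the vertex operator coefficients:
`u_n` maps `V_(k)` to `V_(k + m - n - 1)` for `u ∈ V_(m)`. -/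
structure GradedVA (V : Type*) [AddCommGroup V] [Module ℂ V] extends VertexAlgebra V where
  gr : ℤ → Submodule ℂ V
  internal : DirectSum.IsInternal gr
  vac_mem : vac ∈ gr 0
  coeff_grade : ∀ {m : ℤ} {u : V}, u ∈ gr m → ∀ (n : ℤ) {k : ℤ} {v : V}, v ∈ gr k →
    coeff u n v ∈ gr (k + m - n - 1)

/-- An ℕ-graded vertex algebra: `V_(n) = 0` for `n < 0`. -/
def GradedVA.IsNNGraded {V : Type*} [AddCommGroup V] [Module ℂ V] (A : GradedVA V) : Prop :=
  ∀ n : ℤ, n < 0 → A.gr n = ⊥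

/-- The property that a family of coefficient operators `Yw u n = u_n` defines a weak
module structure over the vertex algebra `A` on `W`: linearity in `u`, lower
truncation, the vacuum property `Y_W(1,x) = id`, and the Borcherds (Jacobi) identity. -/
def IsWeakModule {V W : Type*} [AddCommGroup V] [Module ℂ V] [AddCommGroup W] [Module ℂ W]
    (A : VertexAlgebra V) (Yw : V → ℤ → W →ₗ[ℂ] W) : Prop :=
  (∀ (u v : V) (n : ℤ), Yw (u + v) n = Yw u n + Yw v n) ∧
  (∀ (c : ℂ) (u : V) (n : ℤ), Yw (c • u) n = c • Yw u n) ∧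
  (∀ (u : V) (w : W), ∃ N : ℤ, ∀ n ≥ N, Yw u n w = 0) ∧
  (∀ w : W, Yw A.vac (-1) w = w) ∧
  (∀ n : ℤ, n ≠ -1 → Yw A.vac n = 0) ∧
  (∀ (u v : V) (w : W) (p q r : ℤ),
    (∑ᶠ i : ℕ, gb p i • Yw (A.coeff u (r + i) v) (p + q - i) w) =
    ∑ᶠ i : ℕ, ((-1 : ℂ) ^ i * gb r i) •
      (Yw u (p + r - i) (Yw v (q + i) w)
        - ((-1 : ℂ) ^ r) • Yw v (q + r - i) (Yw u (p + i) w)))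

/-- An ℕ-grading on a weak module: an internal direct sum `W = ⨁ W_(n)` with
`W_(n) = 0` for `n < 0` and `u_n : W_(k) → W_(k + m - n - 1)` for `u ∈ V_(m)`. -/
def IsNNGradedModule {V W : Type*} [AddCommGroup V] [Module ℂ V] [AddCommGroup W]
    [Module ℂ W] (A : GradedVA V) (Yw : V → ℤ → W →ₗ[ℂ] W)
    (wgr : ℤ → Submodule ℂ W) : Prop :=
  DirectSum.IsInternal wgr ∧ (∀ n : ℤ, n < 0 → wgr n = ⊥) ∧
  (∀ {m : ℤ} {u : V}, u ∈ A.gr m → ∀ (n : ℤ) {k : ℤ} {w : W}, w ∈ wgr k →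
    Yw u n w ∈ wgr (k + m - n - 1))

/-- The top level `T(W)` of a module: the subspace of `w ∈ W` with `u_n w = 0`
whenever `wt u - n - 1 < 0` for homogeneous `u`. -/
def topLevel {V W : Type*} [AddCommGroup V] [Module ℂ V] [AddCommGroup W] [Module ℂ W]
    (A : GradedVA V) (Yw : V → ℤ → W →ₗ[ℂ] W) : Submodule ℂ W where
  carrier := {w | ∀ (m : ℤ) (u : V), u ∈ A.gr m → ∀ n : ℤ, m - n - 1 < 0 → Yw u n w = 0}
  zero_mem' := by intro m u hu n hn; simp
  add_mem' := by
    intro a b ha hb m u hu n hn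
    rw [map_add, ha m u hu n hn, hb m u hu n hn, add_zero]
  smul_mem' := by intro c a ha m u hu n hn; rw [map_smul, ha m u hu n hn, smul_zero]

lemma gb_zero_right (a : ℤ) : gb a 0 = 1 := by
  simp [gb]

lemma gb_nat_eq_zero {m j : ℕ} (h : m < j) : gb (m : ℤ) j = 0 := by
  unfold gb
  rw [Finset.prod_eq_zero (Finset.mem_range.2 h) (by push_cast; ring), zero_div]

lemma gb_zero_left {i : ℕ} (h : i ≠ 0) : gb 0 i = 0 := by
  have := gb_nat_eq_zero (m := 0) (j := i) (Nat.pos_of_ne_zero h)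
  simpa using this

lemma gb_neg_one (i : ℕ) : gb (-1) i = (-1 : ℂ) ^ i := by
  unfold gb
  have h : ∏ j ∈ Finset.range i, ((((-1 : ℤ)) : ℂ) - (j : ℂ)) =
      (-1 : ℂ) ^ i * (Nat.factorial i : ℂ) := by
    induction i with
    | zero => simp
    | succ k ih =>
      rw [Finset.prod_range_succ, ih, Nat.factorial_succ]
      push_cast
      ring
  rw [h, mul_div_assoc, div_self (by exact_mod_cast Nat.factorial_ne_zero i), mul_one]

lemma topLevel_mem {V W : Type*} [AddCommGroup V] [Module ℂ V] [AddCommGroup W]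
    [Module ℂ W] {A : GradedVA V} {Yw : V → ℤ → W →ₗ[ℂ] W} {w : W}
    (hw : w ∈ topLevel A Yw) :
    ∀ (m : ℤ) (u : V), u ∈ A.gr m → ∀ n : ℤ, m - n - 1 < 0 → Yw u n w = 0 := hw

/-- Zhu's theorem on the top level: for an ℕ-graded vertex algebra `V`
and an ℕ-gradable weak `V`-module `W`, the zero mode `o(u) = u_{wt u - 1}` preserves
the top level `T(W)`, and `u + O(V) ↦ o(u)` defines an `A(V)`-module structure on
`T(W)`: `o(u*v)w = o(u)o(v)w`, and `o(x)w = 0` for `x` among the spanning elements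
`Res_x x^n Y((x+1)^{L(0)}u, x)v` (`n ≤ -2`) of `O(V)`. -/
theorem statement7 {V W : Type*} [AddCommGroup V] [Module ℂ V]
    [AddCommGroup W] [Module ℂ W] (A : GradedVA V) (hA : A.IsNNGraded)
    (Yw : V → ℤ → W →ₗ[ℂ] W) (wgr : ℤ → Submodule ℂ W)
    (hW : IsWeakModule A.toVertexAlgebra Yw)
    (hWgr : IsNNGradedModule A Yw wgr) :
    -- (1) `o(u)` preserves the top level
    (∀ (wu : ℕ) (u : V), u ∈ A.gr (wu : ℤ) → ∀ w ∈ topLevel A Yw,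
      Yw u ((wu : ℤ) - 1) w ∈ topLevel A Yw) ∧
    -- (2) `o(u * v) w = o(u) o(v) w` on the top level, where
    -- `u * v = Σ_{j=0}^{wt u} C(wt u, j) u_{j-1} v`
    (∀ (wu wv : ℕ) (u v : V), u ∈ A.gr (wu : ℤ) → v ∈ A.gr (wv : ℤ) →
      ∀ w ∈ topLevel A Yw,
        ∑ j ∈ Finset.range (wu + 1),
          gb (wu : ℤ) j • Yw (A.coeff u ((j : ℤ) - 1) v) ((wu : ℤ) + (wv : ℤ) - j - 1) w =
        Yw u ((wu : ℤ) - 1) (Yw v ((wv : ℤ) - 1) w)) ∧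
    -- (3) `o(x) w = 0` for `x = Res_x x^n Y((x+1)^{L(0)}u, x)v ∈ O(V)`, `n ≤ -2`
    (∀ (wu wv : ℕ) (u v : V), u ∈ A.gr (wu : ℤ) → v ∈ A.gr (wv : ℤ) →
      ∀ n : ℤ, n ≤ -2 → ∀ w ∈ topLevel A Yw,
        ∑ j ∈ Finset.range (wu + 1),
          gb (wu : ℤ) j •
            Yw (A.coeff u (n + j) v) ((wu : ℤ) + (wv : ℤ) - n - j - 2) w = 0) := by
  obtain ⟨h1, h2, h3, h4, h5, hB⟩ := hW
  refine ⟨?_, ?_, ?_⟩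
  · -- (1)
    intro wu u hu w hw
    intro m v hv n hn
    have hJ := hB v u w n ((wu : ℤ) - 1) 0
    have hL : (∑ᶠ i : ℕ, gb n i •
        Yw (A.coeff v (0 + i) u) (n + ((wu : ℤ) - 1) - i) w) = 0 := by
      refine finsum_eq_zero_of_forall_eq_zero fun i => ?_
      rw [topLevel_mem hw _ _ (A.coeff_grade hv (0 + (i : ℤ)) hu) _ (by omega), smul_zero]
    rw [hL] at hJ
    have hR := finsum_eq_single
      (fun i : ℕ => ((-1 : ℂ) ^ i * gb 0 i) •
        (Yw v (n + 0 - i) (Yw u (((wu : ℤ) - 1) + i) w)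
          - ((-1 : ℂ) ^ (0 : ℤ)) • Yw u (((wu : ℤ) - 1) + 0 - i) (Yw v (n + i) w))) 0
      (fun i hi => by simp [gb_zero_left hi])
    rw [hR] at hJ
    have h0 : Yw v n w = 0 := topLevel_mem hw _ v hv _ (by omega)
    simp only [Nat.cast_zero, pow_zero, gb_zero_right, one_mul, zpow_zero, one_smul,
      add_zero, sub_zero, h0, map_zero] at hJ
    exact hJ.symm
  · -- (2)
    intro wu wv u v hu hv w hw
    have hJ := hB u v w (wu : ℤ) ((wv : ℤ) - 1) (-1)
    have hL : (∑ᶠ i : ℕ, gb (wu : ℤ) i •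
        Yw (A.coeff u (-1 + i) v) ((wu : ℤ) + ((wv : ℤ) - 1) - i) w) =
        ∑ j ∈ Finset.range (wu + 1),
          gb (wu : ℤ) j • Yw (A.coeff u ((j : ℤ) - 1) v) ((wu : ℤ) + (wv : ℤ) - j - 1) w := by
      rw [finsum_eq_finset_sum_of_support_subset _ (s := Finset.range (wu + 1)) ?_]
      · exact Finset.sum_congr rfl fun j _ => by
          rw [show (-1 + (j : ℤ)) = (j : ℤ) - 1 by ring,
            show (wu : ℤ) + ((wv : ℤ) - 1) - j = (wu : ℤ) + (wv : ℤ) - j - 1 by ring]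
      · intro i hi
        simp only [Function.mem_support] at hi
        simp only [Finset.coe_range, Set.mem_Iio]
        by_contra hle
        exact hi (by rw [gb_nat_eq_zero (by omega), zero_smul])
    rw [hL] at hJ
    have hR := finsum_eq_single
      (fun i : ℕ => ((-1 : ℂ) ^ i * gb (-1) i) •
        (Yw u ((wu : ℤ) + (-1) - i) (Yw v (((wv : ℤ) - 1) + i) w)
          - ((-1 : ℂ) ^ (-1 : ℤ)) •
              Yw v (((wv : ℤ) - 1) + (-1) - i) (Yw u ((wu : ℤ) + i) w))) 0
      (fun i hi => by
        have hv0 : Yw v (((wv : ℤ) - 1) + i) w = 0 := topLevel_mem hw _ v hv _ (by omega)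
        have hu0 : Yw u ((wu : ℤ) + i) w = 0 := topLevel_mem hw _ u hu _ (by omega)
        simp only [hv0, hu0, map_zero, smul_zero, sub_zero])
    rw [hR] at hJ
    rw [hJ]
    have hu0 : Yw u ((wu : ℤ)) w = 0 := topLevel_mem hw _ u hu _ (by omega)
    simp only [Nat.cast_zero, pow_zero, gb_zero_right, one_mul, add_zero, hu0, map_zero,
      smul_zero, sub_zero, one_smul]
    rw [show (wu : ℤ) + -1 = (wu : ℤ) - 1 by ring]
  · -- (3)
    intro wu wv u v hu hv n hn w hw
    have hJ := hB u v w (wu : ℤ) ((wv : ℤ) - n - 2) n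
    have hL : (∑ᶠ i : ℕ, gb (wu : ℤ) i •
        Yw (A.coeff u (n + i) v) ((wu : ℤ) + ((wv : ℤ) - n - 2) - i) w) =
        ∑ j ∈ Finset.range (wu + 1),
          gb (wu : ℤ) j •
            Yw (A.coeff u (n + j) v) ((wu : ℤ) + (wv : ℤ) - n - j - 2) w := by
      rw [finsum_eq_finset_sum_of_support_subset _ (s := Finset.range (wu + 1)) ?_]
      · exact Finset.sum_congr rfl fun j _ => by
          rw [show (wu : ℤ) + ((wv : ℤ) - n - 2) - j = (wu : ℤ) + (wv : ℤ) - n - j - 2 by ring]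
      · intro i hi
        simp only [Function.mem_support] at hi
        simp only [Finset.coe_range, Set.mem_Iio]
        by_contra hle
        exact hi (by rw [gb_nat_eq_zero (by omega), zero_smul])
    have hR : (∑ᶠ i : ℕ, ((-1 : ℂ) ^ i * gb n i) •
        (Yw u ((wu : ℤ) + n - i) (Yw v (((wv : ℤ) - n - 2) + i) w)
          - ((-1 : ℂ) ^ n) •
              Yw v (((wv : ℤ) - n - 2) + n - i) (Yw u ((wu : ℤ) + i) w))) = 0 := by
      refine finsum_eq_zero_of_forall_eq_zero fun i => ?_
      have hv0 : Yw v (((wv : ℤ) - n - 2) + i) w = 0 := topLevel_mem hw _ v hv _ (by omega)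
      have hu0 : Yw u ((wu : ℤ) + i) w = 0 := topLevel_mem hw _ u hu _ (by omega)
      simp [hv0, hu0]
    rw [hL, hR] at hJ
    exact hJ
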